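/- Let X be a finite-dimensional Banach space and T, A nonzero bounded linear operators on X. Then T ⊥_B^w A (i.e., ‖T + λA‖_w ≥ ‖T‖_w for all scalars λ) if and only if 0 belongs to the convex hull of D = { conj(x*(Tx)) · x*(Ax) : (x, x*) ∈ M_{W(T)} }. -/

import Mathlib

/-- The numerical radius of a bounded linear operator. -/
noncomputable def nrad {𝕜 X : Type*} [RCLike 𝕜] [NormedAddCommGroup X] [NormedSpace 𝕜 X]
    (T : X →L[𝕜] X) : ℝ :=
  sSup {r : ℝ | ∃ (x : X) (f : X →L[𝕜] 𝕜), ‖x‖ = 1 ∧ ‖f‖ = 1 ∧ f x = 1 ∧ r = ‖f (T x)‖}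

/-- The numerical radius attainment set of `T`. -/
noncomputable def MW {𝕜 X : Type*} [RCLike 𝕜] [NormedAddCommGroup X] [NormedSpace 𝕜 X]
    (T : X →L[𝕜] X) : Set (X × (X →L[𝕜] 𝕜)) :=
  {p | ‖p.1‖ = 1 ∧ ‖p.2‖ = 1 ∧ p.2 p.1 = 1 ∧ ‖p.2 (T p.1)‖ = nrad T}

open Filter Topology RCLike

set_option linter.unusedSectionVars false
set_option maxHeartbeats 1000000

section Aux

variable (𝕜 X : Type*) [RCLike 𝕜] [NormedAddCommGroup X] [NormedSpace 𝕜 X]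

def Pset : Set (X × (X →L[𝕜] 𝕜)) := {p | ‖p.1‖ = 1 ∧ ‖p.2‖ = 1 ∧ p.2 p.1 = 1}

variable {𝕜 X}

lemma continuous_evalT (T : X →L[𝕜] X) :
    Continuous fun p : X × (X →L[𝕜] 𝕜) => p.2 (T p.1) :=
  isBoundedBilinearMap_apply.continuous.comp
    (continuous_snd.prodMk (T.continuous.comp continuous_fst))

lemma isClosed_Pset : IsClosed (Pset 𝕜 X) := by
  have h1 : IsClosed {p : X × (X →L[𝕜] 𝕜) | ‖p.1‖ = 1} :=
    isClosed_eq (continuous_norm.comp continuous_fst) continuous_const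
  have h2 : IsClosed {p : X × (X →L[𝕜] 𝕜) | ‖p.2‖ = 1} :=
    isClosed_eq (continuous_norm.comp continuous_snd) continuous_const
  have h3 : IsClosed {p : X × (X →L[𝕜] 𝕜) | p.2 p.1 = 1} :=
    isClosed_eq (isBoundedBilinearMap_apply.continuous.comp
      (continuous_snd.prodMk continuous_fst)) continuous_const
  have : Pset 𝕜 X = {p : X × (X →L[𝕜] 𝕜) | ‖p.1‖ = 1} ∩
      ({p : X × (X →L[𝕜] 𝕜) | ‖p.2‖ = 1} ∩ {p : X × (X →L[𝕜] 𝕜) | p.2 p.1 = 1}) := rfl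
  rw [this]
  exact h1.inter (h2.inter h3)

lemma mem_MW_iff (T : X →L[𝕜] X) {p : X × (X →L[𝕜] 𝕜)} :
    p ∈ MW T ↔ p ∈ Pset 𝕜 X ∧ ‖p.2 (T p.1)‖ = nrad T := by
  simp [MW, Pset, Set.mem_setOf_eq, and_assoc]

variable [FiniteDimensional 𝕜 X]

lemma isCompact_Pset : IsCompact (Pset 𝕜 X) := by
  haveI : ProperSpace (X × (X →L[𝕜] 𝕜)) := FiniteDimensional.proper_rclike 𝕜 _
  apply Metric.isCompact_of_isClosed_isBounded isClosed_Pset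
  apply isBounded_iff_forall_norm_le.2 ⟨1, ?_⟩
  rintro ⟨x, f⟩ ⟨h1, h2, _⟩
  simp [Prod.norm_def, h1, h2]

lemma Pset_nonempty [Nontrivial X] : (Pset 𝕜 X).Nonempty := by
  obtain ⟨x, hx⟩ := exists_ne (0 : X)
  have hy : ‖(‖x‖⁻¹ : 𝕜) • x‖ = 1 := norm_smul_inv_norm hx
  obtain ⟨f, hf1, hf2⟩ := exists_dual_vector 𝕜 ((‖x‖⁻¹ : 𝕜) • x) (by
    intro h; rw [h] at hy; norm_num at hy)
  exact ⟨((‖x‖⁻¹ : 𝕜) • x, f), hy, hf1, by rw [hf2, hy]; norm_num⟩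

lemma nrad_isGreatest [Nontrivial X] (T : X →L[𝕜] X) :
    IsGreatest ((fun p : X × (X →L[𝕜] 𝕜) => ‖p.2 (T p.1)‖) '' Pset 𝕜 X) (nrad T) := by
  have himg : {r : ℝ | ∃ (x : X) (f : X →L[𝕜] 𝕜), ‖x‖ = 1 ∧ ‖f‖ = 1 ∧ f x = 1 ∧ r = ‖f (T x)‖}
      = (fun p : X × (X →L[𝕜] 𝕜) => ‖p.2 (T p.1)‖) '' Pset 𝕜 X := by
    ext r
    constructor
    · rintro ⟨x, f, h1, h2, h3, rfl⟩; exact ⟨(x, f), ⟨h1, h2, h3⟩, rfl⟩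
    · rintro ⟨⟨x, f⟩, ⟨h1, h2, h3⟩, rfl⟩; exact ⟨x, f, h1, h2, h3, rfl⟩
  have hK : IsCompact ((fun p : X × (X →L[𝕜] 𝕜) => ‖p.2 (T p.1)‖) '' Pset 𝕜 X) :=
    isCompact_Pset.image (continuous_norm.comp (continuous_evalT T))
  have hne : ((fun p : X × (X →L[𝕜] 𝕜) => ‖p.2 (T p.1)‖) '' Pset 𝕜 X).Nonempty :=
    Pset_nonempty.image _
  rw [nrad, himg]
  exact ⟨hK.sSup_mem hne, fun r hr => le_csSup hK.bddAbove hr⟩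

lemma le_nrad [Nontrivial X] (T : X →L[𝕜] X) {p : X × (X →L[𝕜] 𝕜)} (hp : p ∈ Pset 𝕜 X) :
    ‖p.2 (T p.1)‖ ≤ nrad T :=
  (nrad_isGreatest T).2 ⟨p, hp, rfl⟩

lemma nrad_nonneg [Nontrivial X] (T : X →L[𝕜] X) : 0 ≤ nrad T := by
  obtain ⟨p, _, hp⟩ := (nrad_isGreatest T).1
  rw [← hp]; exact norm_nonneg _

lemma exists_MW [Nontrivial X] (T : X →L[𝕜] X) : ∃ p, p ∈ MW T := by
  obtain ⟨p, hp1, hp2⟩ := (nrad_isGreatest T).1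
  exact ⟨p, (mem_MW_iff T).2 ⟨hp1, hp2⟩⟩

lemma key_lower [Nontrivial X] (T A : X →L[𝕜] X) (lam : 𝕜) {p : X × (X →L[𝕜] 𝕜)}
    (hp : p ∈ MW T)
    (hre : 0 ≤ re (lam * ((starRingEnd 𝕜) (p.2 (T p.1)) * p.2 (A p.1)))) :
    nrad T ≤ nrad (T + lam • A) := by
  obtain ⟨hpP, hval⟩ := (mem_MW_iff T).1 hp
  set a := p.2 (T p.1) with ha
  set b := p.2 (A p.1) with hb
  have happ : p.2 ((T + lam • A) p.1) = a + lam * b := by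
    simp [ha, hb, smul_eq_mul, mul_comm]
  have hle : ‖a + lam * b‖ ≤ nrad (T + lam • A) := by
    rw [← happ]; exact le_nrad _ hpP
  have hexp : (starRingEnd 𝕜) a * (a + lam * b)
      = ((‖a‖ ^ 2 : ℝ) : 𝕜) + lam * ((starRingEnd 𝕜) a * b) := by
    rw [mul_add, RCLike.conj_mul]; push_cast; ring
  have h1 : ‖a‖ ^ 2 ≤ ‖a‖ * ‖a + lam * b‖ := by
    calc ‖a‖ ^ 2 ≤ ‖a‖ ^ 2 + re (lam * ((starRingEnd 𝕜) a * b)) := by linarith [hre]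
      _ = re ((starRingEnd 𝕜) a * (a + lam * b)) := by rw [hexp, map_add, ofReal_re]
      _ ≤ ‖(starRingEnd 𝕜) a * (a + lam * b)‖ := re_le_norm _
      _ = ‖a‖ * ‖a + lam * b‖ := by rw [norm_mul, RCLike.norm_conj]
  rcases eq_or_lt_of_le (nrad_nonneg T) with h0 | h0
  · rw [← h0]; exact nrad_nonneg _
  · have hapos : 0 < ‖a‖ := hval ▸ h0
    have : ‖a‖ ≤ ‖a + lam * b‖ := by
      rw [pow_two] at h1
      exact le_of_mul_le_mul_left h1 hapos
    calc nrad T = ‖a‖ := hval.symm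
      _ ≤ ‖a + lam * b‖ := this
      _ ≤ nrad (T + lam • A) := hle

end Aux

set_option linter.unusedSectionVars false

lemma isCompact_convexHull_of_isCompact {E : Type*} [NormedAddCommGroup E] [NormedSpace ℝ E]
    [FiniteDimensional ℝ E] {D : Set E} (hD : IsCompact D) : IsCompact (convexHull ℝ D) := by
  classical
  rcases D.eq_empty_or_nonempty with rfl | ⟨z₀, hz₀⟩
  · simpa using isCompact_empty
  · set n := Module.finrank ℝ E + 1 with hn
    set g : (Fin n → ℝ) × (Fin n → E) → E := fun q => ∑ i, q.1 i • q.2 i with hg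
    have hgc : Continuous g := continuous_finset_sum _ fun i _ =>
      ((continuous_apply i).comp continuous_fst).smul ((continuous_apply i).comp continuous_snd)
    have hK : IsCompact ((stdSimplex ℝ (Fin n)) ×ˢ (Set.univ.pi fun _ : Fin n => D)) :=
      (isCompact_stdSimplex (𝕜 := ℝ) (ι := Fin n)).prod (isCompact_univ_pi fun _ => hD)
    have himg : convexHull ℝ D
        = g '' ((stdSimplex ℝ (Fin n)) ×ˢ (Set.univ.pi fun _ : Fin n => D)) := by
      apply Set.Subset.antisymm
      · intro x hx
        obtain ⟨ι, hι, z, w, hzD, hai, hwpos, hw1, hsum⟩ :=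
          eq_pos_convex_span_of_mem_convexHull hx
        letI := hι
        have hw1 : ∑ i : ι, w i = 1 := hw1
        have hsum : ∑ i : ι, w i • z i = x := hsum
        have hcard : Fintype.card ι ≤ n := by
          have h1 := hai.card_le_finrank_succ
          exact h1.trans (Nat.add_le_add_right (Submodule.finrank_le _) 1)
        obtain ⟨emb⟩ : Nonempty (ι ↪ Fin n) :=
          Function.Embedding.nonempty_of_card_le (by simpa using hcard)
        set w' : Fin n → ℝ := fun j => if h : ∃ i, emb i = j then w h.choose else 0 with hw'
        set z' : Fin n → E := fun j => if h : ∃ i, emb i = j then z h.choose else z₀ with hz'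
        have hkey : ∀ i : ι, w' (emb i) = w i ∧ z' (emb i) = z i := by
          intro i
          have h : ∃ i', emb i' = emb i := ⟨i, rfl⟩
          have hch : h.choose = i := emb.injective h.choose_spec
          constructor
          · simp only [hw', dif_pos h, hch]
          · simp only [hz', dif_pos h, hch]
        have hzero : ∀ j : Fin n, j ∉ Finset.univ.image emb → w' j = 0 := by
          intro j hj
          have : ¬ ∃ i, emb i = j := by
            intro ⟨i, hi⟩
            exact hj (Finset.mem_image.2 ⟨i, Finset.mem_univ i, hi⟩)
          simp only [hw', dif_neg this]
        have hinj : ∀ i ∈ Finset.univ, ∀ i' ∈ Finset.univ, emb i = emb i' → i = i' :=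
          fun i _ i' _ h => emb.injective h
        have hsumw : ∑ j, w' j = 1 := by
          rw [← Finset.sum_subset (Finset.subset_univ (Finset.univ.image emb))
            (fun j _ hj => hzero j hj), Finset.sum_image hinj]
          rw [← hw1]
          exact Finset.sum_congr rfl fun i _ => (hkey i).1
        have hsumz : ∑ j, w' j • z' j = x := by
          have hzero' : ∀ j ∈ Finset.univ, j ∉ Finset.univ.image emb → w' j • z' j = 0 := by
            intro j _ hj; rw [hzero j hj, zero_smul]
          rw [← Finset.sum_subset (Finset.subset_univ (Finset.univ.image emb)) hzero',
            Finset.sum_image hinj]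
          rw [← hsum]
          exact Finset.sum_congr rfl fun i _ => by rw [(hkey i).1, (hkey i).2]
        refine ⟨(w', z'), ⟨⟨fun j => ?_, hsumw⟩, fun j _ => ?_⟩, hsumz⟩
        · by_cases h : ∃ i, emb i = j
          · simp only [hw', dif_pos h]; exact (hwpos _).le
          · simp only [hw', dif_neg h]
            exact le_rfl
        · by_cases h : ∃ i, emb i = j
          · simp only [hz', dif_pos h]; exact hzD ⟨h.choose, rfl⟩
          · simp only [hz', dif_neg h]; exact hz₀
      · rintro x ⟨⟨w, z⟩, ⟨hw, hz⟩, rfl⟩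
        exact (convex_convexHull ℝ D).sum_mem (fun i _ => hw.1 i) hw.2
          (fun i _ => subset_convexHull ℝ D (hz i (Set.mem_univ i)))
    rw [himg]
    exact hK.image hgc

lemma exists_re_rep {𝕜 : Type*} [RCLike 𝕜] (φ : 𝕜 →L[ℝ] ℝ) :
    ∃ μ : 𝕜, ∀ z : 𝕜, φ z = re (μ * z) := by
  refine ⟨(φ 1 : ℝ) • (1 : 𝕜) - (φ (I : 𝕜)) • (I : 𝕜), fun z => ?_⟩
  have hz : z = (re z : ℝ) • (1 : 𝕜) + (im z : ℝ) • (I : 𝕜) := by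
    rw [real_smul_eq_coe_mul, real_smul_eq_coe_mul, mul_one]
    exact (re_add_im z).symm
  conv_lhs => rw [hz, map_add, map_smul, map_smul]
  rw [sub_mul, smul_mul_assoc, smul_mul_assoc, one_mul, map_sub, smul_re, smul_re, I_mul_re]
  simp only [smul_eq_mul]
  ring

lemma app_add_smul {𝕜 X : Type*} [RCLike 𝕜] [NormedAddCommGroup X] [NormedSpace 𝕜 X]
    (T A : X →L[𝕜] X) (c : 𝕜) (p : X × (X →L[𝕜] 𝕜)) :
    p.2 ((T + c • A) p.1) = p.2 (T p.1) + c * p.2 (A p.1) := by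
  simp [smul_eq_mul]

/-- `T ⊥_B^w A` iff `0` lies in the convex hull of
`D = { conj(x*(Tx)) · x*(Ax) : (x, x*) ∈ M_{W(T)} }`. -/
theorem nu_orthogonality_iff (𝕜 X : Type*) [RCLike 𝕜] [NormedAddCommGroup X]
    [NormedSpace 𝕜 X] [FiniteDimensional 𝕜 X]
    (T A : X →L[𝕜] X) (hT : T ≠ 0) (hA : A ≠ 0) :
    (∀ lam : 𝕜, nrad T ≤ nrad (T + lam • A)) ↔
      (0 : 𝕜) ∈ convexHull ℝ
        {d : 𝕜 | ∃ p ∈ MW T, d = (starRingEnd 𝕜) (p.2 (T p.1)) * p.2 (A p.1)} := by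
  have hXnt : Nontrivial X := by
    rcases subsingleton_or_nontrivial X with h | h
    · exact absurd (by ext x; exact Subsingleton.elim _ _) hT
    · exact h
  constructor
  · -- forward direction
    intro hyp
    by_contra h0
    set dmap : X × (X →L[𝕜] 𝕜) → 𝕜 :=
      fun p => (starRingEnd 𝕜) (p.2 (T p.1)) * p.2 (A p.1) with hdmap
    have hdc : Continuous dmap :=
      ((continuous_evalT T).star).mul (continuous_evalT A)
    have hDs_img : {d : 𝕜 | ∃ p ∈ MW T, d = (starRingEnd 𝕜) (p.2 (T p.1)) * p.2 (A p.1)}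
        = dmap '' MW T := by
      ext d
      constructor
      · rintro ⟨p, hp, rfl⟩; exact ⟨p, hp, rfl⟩
      · rintro ⟨p, hp, rfl⟩; exact ⟨p, hp, rfl⟩
    rw [hDs_img] at h0
    have hMWc : IsCompact (MW T) := by
      have hMWeq : MW T = Pset 𝕜 X ∩ {p | ‖p.2 (T p.1)‖ = nrad T} := by
        ext p; exact mem_MW_iff T
      rw [hMWeq]
      exact isCompact_Pset.inter_right
        (isClosed_eq (continuous_norm.comp (continuous_evalT T)) continuous_const)
    have hDc : IsCompact (dmap '' MW T) := hMWc.image hdc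
    have hhull : IsCompact (convexHull ℝ (dmap '' MW T)) :=
      isCompact_convexHull_of_isCompact hDc
    obtain ⟨φ, u, hφ, hu⟩ := geometric_hahn_banach_closed_point
      (convex_convexHull ℝ _) hhull.isClosed h0
    rw [map_zero] at hu
    obtain ⟨μ, hμ⟩ := exists_re_rep φ
    set C : ℝ := ‖μ‖ * ‖A‖ with hC
    have hC0 : 0 ≤ C := mul_nonneg (norm_nonneg _) (norm_nonneg _)
    set t : ℕ → ℝ := fun k => 1 / (k + 1) with ht
    have htpos : ∀ k, 0 < t k := fun k => by positivity
    have htlim : Tendsto t atTop (𝓝 0) := tendsto_one_div_add_atTop_nhds_zero_nat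
    have hsel : ∀ k : ℕ, ∃ p, p ∈ MW (T + (((t k : ℝ) : 𝕜) * μ) • A) := fun k => exists_MW _
    choose p hp using hsel
    have hpP : ∀ k, p k ∈ Pset 𝕜 X := fun k => ((mem_MW_iff _).1 (hp k)).1
    obtain ⟨q, hqP, γ, hγ, hql⟩ := isCompact_Pset.tendsto_subseq hpP
    have hAb : ∀ k, ‖(p k).2 (A (p k).1)‖ ≤ ‖A‖ := by
      intro k
      obtain ⟨h1, h2, h3⟩ := hpP k
      calc ‖(p k).2 (A (p k).1)‖ ≤ ‖(p k).2‖ * ‖A (p k).1‖ := (p k).2.le_opNorm _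
        _ = ‖A (p k).1‖ := by rw [h2, one_mul]
        _ ≤ ‖A‖ * ‖(p k).1‖ := A.le_opNorm _
        _ = ‖A‖ := by rw [h1, mul_one]
    have hnval : ∀ k, ‖(p k).2 ((T + (((t k : ℝ) : 𝕜) * μ) • A) (p k).1)‖
        = nrad (T + (((t k : ℝ) : 𝕜) * μ) • A) := fun k => ((mem_MW_iff _).1 (hp k)).2
    have hlow : ∀ k, nrad T - t k * C ≤ ‖(p k).2 (T (p k).1)‖ := by
      intro k
      have h1 : nrad T
          ≤ ‖(p k).2 (T (p k).1) + (((t k : ℝ) : 𝕜) * μ) * (p k).2 (A (p k).1)‖ := by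
        rw [← app_add_smul, hnval k]
        exact hyp _
      have h2 : ‖(((t k : ℝ) : 𝕜) * μ) * (p k).2 (A (p k).1)‖ ≤ t k * C := by
        rw [norm_mul, norm_mul, RCLike.norm_ofReal, abs_of_pos (htpos k), hC, ← mul_assoc]
        exact mul_le_mul_of_nonneg_left (hAb k) (mul_nonneg (htpos k).le (norm_nonneg μ))
      linarith [norm_add_le ((p k).2 (T (p k).1))
        ((((t k : ℝ) : 𝕜) * μ) * (p k).2 (A (p k).1)), h1, h2]
    have hup : ∀ k, ‖(p k).2 (T (p k).1)‖ ≤ nrad T := fun k => le_nrad T (hpP k)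
    have hql' : Tendsto (fun k => p (γ k)) atTop (𝓝 q) := hql
    have hqval : ‖q.2 (T q.1)‖ = nrad T := by
      have hconv : Tendsto (fun k => ‖(p (γ k)).2 (T (p (γ k)).1)‖) atTop (𝓝 ‖q.2 (T q.1)‖) :=
        ((continuous_norm.comp (continuous_evalT T)).tendsto q).comp hql'
      refine le_antisymm (le_of_tendsto hconv (Eventually.of_forall fun k => hup _)) ?_
      have htγ : Tendsto (fun k => t (γ k)) atTop (𝓝 0) := htlim.comp hγ.tendsto_atTop
      have hlim2 : Tendsto (fun k => nrad T - t (γ k) * C) atTop (𝓝 (nrad T)) := by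
        have h := (tendsto_const_nhds (x := nrad T) (f := (atTop : Filter ℕ))).sub
          (htγ.mul_const C)
        simpa using h
      exact le_of_tendsto_of_tendsto' hlim2 hconv fun k => hlow (γ k)
    have hqMW : q ∈ MW T := (mem_MW_iff T).2 ⟨hqP, hqval⟩
    have hdneg : re (μ * dmap q) < u := by
      rw [← hμ]
      exact hφ _ (subset_convexHull ℝ _ ⟨q, hqMW, rfl⟩)
    have hcont2 : Tendsto (fun k => re (μ * dmap (p (γ k)))) atTop (𝓝 (re (μ * dmap q))) :=
      ((RCLike.continuous_re.comp (continuous_const.mul hdc)).tendsto q).comp hql'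
    have hu2 : u < 0 := hu
    have hev1 : ∀ᶠ k in atTop, re (μ * dmap (p (γ k))) < u / 2 :=
      hcont2.eventually_lt_const (by linarith)
    have hev2 : ∀ᶠ k in atTop, t (γ k) < (-u) / (C ^ 2 + 1) :=
      (htlim.comp hγ.tendsto_atTop).eventually_lt_const (div_pos (by linarith) (by positivity))
    obtain ⟨k, hk1, hk2⟩ := (hev1.and hev2).exists
    set t₀ := t (γ k) with ht₀def
    have ht₀ : 0 < t₀ := htpos _
    set a := (p (γ k)).2 (T (p (γ k)).1) with hadef
    set b := (p (γ k)).2 (A (p (γ k)).1) with hbdef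
    have ha : ‖a‖ ≤ nrad T := hup (γ k)
    have hb : ‖b‖ ≤ ‖A‖ := hAb (γ k)
    have hmain : nrad T ≤ ‖a + ((t₀ : ℝ) : 𝕜) * μ * b‖ := by
      have h1 : nrad T ≤ ‖(p (γ k)).2 ((T + (((t (γ k) : ℝ) : 𝕜) * μ) • A) (p (γ k)).1)‖ := by
        rw [hnval (γ k)]
        exact hyp _
      rw [app_add_smul] at h1
      calc nrad T ≤ ‖a + (((t (γ k) : ℝ) : 𝕜) * μ) * b‖ := h1
        _ = ‖a + ((t₀ : ℝ) : 𝕜) * μ * b‖ := by rw [← ht₀def, mul_assoc]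
    have hr : re (μ * ((starRingEnd 𝕜) a * b)) < u / 2 := hk1
    have hsq := norm_add_sq (𝕜 := 𝕜) (E := 𝕜) a (((t₀ : ℝ) : 𝕜) * μ * b)
    rw [RCLike.inner_apply, mul_comm (((t₀ : ℝ) : 𝕜) * μ * b)] at hsq
    have hre2 : re ((starRingEnd 𝕜) a * (((t₀ : ℝ) : 𝕜) * μ * b))
        = t₀ * re (μ * ((starRingEnd 𝕜) a * b)) := by
      rw [show (starRingEnd 𝕜) a * (((t₀ : ℝ) : 𝕜) * μ * b)
        = ((t₀ : ℝ) : 𝕜) * (μ * ((starRingEnd 𝕜) a * b)) by ring, re_ofReal_mul]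
    have hnb : ‖((t₀ : ℝ) : 𝕜) * μ * b‖ ≤ t₀ * C := by
      rw [norm_mul, norm_mul, RCLike.norm_ofReal, abs_of_pos ht₀, hC, ← mul_assoc]
      exact mul_le_mul_of_nonneg_left hb (mul_nonneg ht₀.le (norm_nonneg μ))
    have h1 : nrad T ^ 2 ≤ ‖a + ((t₀ : ℝ) : 𝕜) * μ * b‖ ^ 2 :=
      pow_le_pow_left₀ (nrad_nonneg T) hmain 2
    have h2 : ‖a‖ ^ 2 ≤ nrad T ^ 2 := pow_le_pow_left₀ (norm_nonneg a) ha 2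
    have h3 : ‖((t₀ : ℝ) : 𝕜) * μ * b‖ ^ 2 ≤ (t₀ * C) ^ 2 :=
      pow_le_pow_left₀ (norm_nonneg _) hnb 2
    have hk2' : t₀ * (C ^ 2 + 1) < -u := by
      rw [lt_div_iff₀ (by positivity)] at hk2
      linarith
    nlinarith [hsq, h1, h2, h3, hre2, mul_lt_mul_of_pos_left hr ht₀,
      mul_lt_mul_of_pos_left hk2' ht₀, mul_pos ht₀ ht₀]
  · -- backward direction
    intro hmem lam
    obtain ⟨ι, hι, z, w, hzD, hai, hwpos, hw1, hsum⟩ :=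
      eq_pos_convex_span_of_mem_convexHull hmem
    letI := hι
    have hw1 : ∑ i : ι, w i = 1 := hw1
    have hsum : ∑ i : ι, w i • z i = (0 : 𝕜) := hsum
    have hne : Nonempty ι := by
      by_contra h
      rw [not_nonempty_iff] at h
      rw [Finset.univ_eq_empty, Finset.sum_empty] at hw1
      norm_num at hw1
    have hsum0 : ∑ i : ι, w i * re (lam * z i) = 0 := by
      have h1 : ∀ i : ι, w i * re (lam * z i) = re (w i • (lam * z i)) :=
        fun i => (smul_re _ _).symm
      rw [Finset.sum_congr rfl fun i _ => h1 i, ← map_sum]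
      have h2 : ∑ i : ι, w i • (lam * z i) = lam * ∑ i : ι, w i • z i := by
        rw [Finset.mul_sum]
        exact Finset.sum_congr rfl fun i _ => (mul_smul_comm _ _ _).symm
      rw [h2, hsum, mul_zero, map_zero]
    obtain ⟨i, hi⟩ : ∃ i : ι, 0 ≤ re (lam * z i) := by
      by_contra h
      push_neg at h
      have hlt : ∑ i : ι, w i * re (lam * z i) < ∑ _i : ι, (0 : ℝ) :=
        Finset.sum_lt_sum_of_nonempty Finset.univ_nonempty
          (fun i _ => mul_neg_of_pos_of_neg (hwpos i) (h i))
      rw [Finset.sum_const_zero] at hlt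
      linarith
    obtain ⟨pp, hppMW, hppz⟩ := hzD (Set.mem_range_self i)
    exact key_lower T A lam hppMW (by rw [← hppz]; exact hi)
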